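/- Let M₁, …, M_{k+1} (k ∈ ℕ) be matrices where each M_g = D(A_g) for some AIMD matrix A_g, and at least one g* satisfies A_{g*} = B, the full back-off matrix. Then for every nonzero z ∈ W_T, the strict contraction property ‖M_{k+1} ⋯ M₂ M₁ z‖_T < ‖z‖_T holds. -/

import Mathlib

noncomputable def l1 {n : ℕ} (z : Fin n → ℝ) : ℝ := ∑ i, |z i|

noncomputable def normT {n T : ℕ} (z : Fin T → Fin n → ℝ) : ℝ := ⨆ ℓ, l1 (z ℓ)

/-- The action of the block matrix `D(A)` on a block vector `z ∈ ℝ^{Tn}`: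
`(D(A)z)₁ = A z₁` and `(D(A)z)_r = (1/r)·A z₁ + ((r−1)/r)·z_{r−1}` for `r = 2,…,T`
(indices here are 0-based). -/
noncomputable def DApply {n T : ℕ} (A : Matrix (Fin n) (Fin n) ℝ)
    (z : Fin T → Fin n → ℝ) : Fin T → Fin n → ℝ :=
  fun r => (1 / ((r : ℕ) + 1) : ℝ) • A.mulVec (z ⟨0, r.pos⟩)
    + (((r : ℕ) : ℝ) / ((r : ℕ) + 1)) • z ⟨(r : ℕ) - 1, lt_of_le_of_lt (Nat.pred_le _) r.isLt⟩

/-- `A` is an AIMD matrix: `A = diag(β̃) + (1/n)·e·(eᵀ − β̃ᵀ)` where each `β̃ᵢ ∈ {β, 1}`. -/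
def IsAIMD (n : ℕ) (β : ℝ) (A : Matrix (Fin n) (Fin n) ℝ) : Prop :=
  ∃ b : Fin n → ℝ, (∀ i, b i = β ∨ b i = 1) ∧
    A = Matrix.diagonal b + (1 / (n : ℝ)) • Matrix.of (fun _ j => 1 - b j)

/-- The full back-off AIMD matrix `B = β·I + ((1−β)/n)·e·eᵀ`. -/
noncomputable def Bmat (n : ℕ) (β : ℝ) : Matrix (Fin n) (Fin n) ℝ :=
  β • (1 : Matrix (Fin n) (Fin n) ℝ) + ((1 - β) / (n : ℝ)) • Matrix.of (fun _ _ => (1 : ℝ))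

section aux
variable {n T : ℕ}

lemma l1_nonneg (z : Fin n → ℝ) : 0 ≤ l1 z :=
  Finset.sum_nonneg fun _ _ => abs_nonneg _

lemma l1_add_le (x y : Fin n → ℝ) : l1 (x + y) ≤ l1 x + l1 y := by
  rw [l1, l1, l1, ← Finset.sum_add_distrib]
  exact Finset.sum_le_sum fun i _ => abs_add_le _ _

lemma l1_smul (c : ℝ) (x : Fin n → ℝ) : l1 (c • x) = |c| * l1 x := by
  simp [l1, Finset.mul_sum, abs_mul]

lemma l1_pos {z : Fin n → ℝ} (h : z ≠ 0) : 0 < l1 z := by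
  obtain ⟨i, hi⟩ := Function.ne_iff.mp h
  have : 0 < |z i| := abs_pos.mpr hi
  calc (0:ℝ) < |z i| := this
    _ ≤ l1 z := Finset.single_le_sum (fun j _ => abs_nonneg (z j)) (Finset.mem_univ i)

-- AIMD entry facts
lemma aimd_nonneg {β : ℝ} (hβ0 : 0 < β) (hβ1 : β < 1) {A : Matrix (Fin n) (Fin n) ℝ}
    (hA : IsAIMD n β A) (i j : Fin n) : 0 ≤ A i j := by
  obtain ⟨b, hb, rfl⟩ := hA
  have hbj : 0 < b j ∧ b j ≤ 1 := by rcases hb j with h | h <;> constructor <;> simp [h] <;> linarith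
  simp only [Matrix.add_apply, Matrix.smul_apply, Matrix.of_apply, Matrix.diagonal_apply,
    smul_eq_mul]
  have h1 : (0:ℝ) ≤ 1/(n:ℝ) := by positivity
  have h2 : (0:ℝ) ≤ 1 - b j := by linarith [hbj.2]
  have h3 : (0:ℝ) ≤ ((n:ℝ))⁻¹ * (1 - b j) :=
    mul_nonneg (inv_nonneg.mpr (Nat.cast_nonneg n)) h2
  by_cases hij : i = j
  · simp only [hij, if_pos rfl]
    simp [one_div]
    nlinarith [hbj.1]
  · simp [hij, one_div]
    nlinarith

lemma aimd_col_sum (hn : 0 < n) {β : ℝ} {A : Matrix (Fin n) (Fin n) ℝ}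
    (hA : IsAIMD n β A) (j : Fin n) : ∑ i, A i j = 1 := by
  obtain ⟨b, hb, rfl⟩ := hA
  have hn' : (n:ℝ) ≠ 0 := Nat.cast_ne_zero.mpr hn.ne'
  simp only [Matrix.add_apply, Matrix.smul_apply, Matrix.of_apply, Matrix.diagonal_apply,
    smul_eq_mul, Finset.sum_add_distrib]
  rw [Finset.sum_ite_eq' Finset.univ j b]
  simp [Finset.mem_univ, Finset.sum_const, Finset.card_univ]
  field_simp
  ring

lemma aimd_l1_mulVec (hn : 0 < n) {β : ℝ} (hβ0 : 0 < β) (hβ1 : β < 1)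
    {A : Matrix (Fin n) (Fin n) ℝ} (hA : IsAIMD n β A) (x : Fin n → ℝ) :
    l1 (A.mulVec x) ≤ l1 x := by
  calc l1 (A.mulVec x) = ∑ i, |∑ j, A i j * x j| := by simp [l1, Matrix.mulVec, dotProduct]
    _ ≤ ∑ i, ∑ j, |A i j * x j| :=
        Finset.sum_le_sum fun i _ => Finset.abs_sum_le_sum_abs _ _
    _ = ∑ j, (∑ i, A i j) * |x j| := by
        rw [Finset.sum_comm]
        refine Finset.sum_congr rfl fun j _ => ?_
        rw [Finset.sum_mul]
        refine Finset.sum_congr rfl fun i _ => ?_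
        rw [abs_mul, abs_of_nonneg (aimd_nonneg hβ0 hβ1 hA i j)]
    _ = l1 x := by
        simp only [l1]
        refine Finset.sum_congr rfl fun j _ => ?_
        rw [aimd_col_sum hn hA j, one_mul]

lemma aimd_sum_mulVec (hn : 0 < n) {β : ℝ} {A : Matrix (Fin n) (Fin n) ℝ}
    (hA : IsAIMD n β A) (x : Fin n → ℝ) :
    ∑ i, A.mulVec x i = ∑ j, x j := by
  simp only [Matrix.mulVec, dotProduct]
  rw [Finset.sum_comm]
  refine Finset.sum_congr rfl fun j _ => ?_
  rw [← Finset.sum_mul, aimd_col_sum hn hA j, one_mul]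

lemma bmat_mulVec {β : ℝ} {x : Fin n → ℝ} (hx : ∑ i, x i = 0) :
    (Bmat n β).mulVec x = β • x := by
  funext i
  simp only [Bmat, Matrix.mulVec, dotProduct, Matrix.add_apply, Matrix.smul_apply,
    Matrix.of_apply, Matrix.one_apply, smul_eq_mul, Pi.smul_apply]
  have key : ∀ j ∈ Finset.univ, (β * (if i = j then (1:ℝ) else 0) + (1-β)/(n:ℝ) * 1) * x j
      = β * (if i = j then x j else 0) + (1-β)/(n:ℝ) * x j := by
    intro j _; by_cases h : i = j <;> simp [h] <;> ring
  rw [Finset.sum_congr rfl key, Finset.sum_add_distrib, ← Finset.mul_sum, ← Finset.mul_sum, hx,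
    mul_zero, add_zero, Finset.sum_ite_eq Finset.univ i x]
  simp

-- normT facts (T > 0)
lemma le_normT (hT : 0 < T) (z : Fin T → Fin n → ℝ) (ℓ : Fin T) : l1 (z ℓ) ≤ normT z := by
  haveI : Nonempty (Fin T) := ⟨⟨0, hT⟩⟩
  exact le_ciSup (f := fun ℓ => l1 (z ℓ)) (Set.Finite.bddAbove (Set.finite_range _)) ℓ

lemma normT_le (hT : 0 < T) {z : Fin T → Fin n → ℝ} {a : ℝ}
    (h : ∀ ℓ, l1 (z ℓ) ≤ a) : normT z ≤ a := by
  haveI : Nonempty (Fin T) := ⟨⟨0, hT⟩⟩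
  exact ciSup_le h

lemma normT_nonneg (hT : 0 < T) (z : Fin T → Fin n → ℝ) : 0 ≤ normT z :=
  le_trans (l1_nonneg (z ⟨0, hT⟩)) (le_normT hT z _)

end aux

section main
variable {n T : ℕ}

lemma DApply_zsum (hn : 0 < n) {β : ℝ} {A : Matrix (Fin n) (Fin n) ℝ} (hA : IsAIMD n β A)
    {z : Fin T → Fin n → ℝ} (hz : ∀ t, ∑ i, z t i = 0) (t : Fin T) :
    ∑ i, DApply A z t i = 0 := by
  simp only [DApply, Pi.add_apply, Pi.smul_apply, smul_eq_mul, Finset.sum_add_distrib,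
    ← Finset.mul_sum]
  rw [aimd_sum_mulVec hn hA, hz, hz]
  ring

lemma DApply_l1_bound (hT : 0 < T) (A : Matrix (Fin n) (Fin n) ℝ)
    (z : Fin T → Fin n → ℝ) (r : Fin T) :
    l1 (DApply A z r) ≤ (1/(((r:ℕ):ℝ)+1)) * l1 (A.mulVec (z ⟨0, r.pos⟩))
      + ((((r:ℕ)):ℝ)/(((r:ℕ):ℝ)+1)) * normT z := by
  refine le_trans (l1_add_le _ _) ?_
  rw [l1_smul, l1_smul, abs_of_nonneg (by positivity : (0:ℝ) ≤ 1/(((r:ℕ):ℝ)+1)),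
    abs_of_nonneg (by positivity : (0:ℝ) ≤ (((r:ℕ)):ℝ)/(((r:ℕ):ℝ)+1))]
  gcongr
  exact le_normT hT z _

lemma DApply_nonexp (hn : 0 < n) (hT : 0 < T) {β : ℝ} (hβ0 : 0 < β) (hβ1 : β < 1)
    {A : Matrix (Fin n) (Fin n) ℝ} (hA : IsAIMD n β A) (z : Fin T → Fin n → ℝ) :
    normT (DApply A z) ≤ normT z := by
  refine normT_le hT fun r => le_trans (DApply_l1_bound hT A z r) ?_
  set M := normT z with hM
  set s : ℝ := ((r:ℕ):ℝ) + 1 with hs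
  have hs0 : (0:ℝ) < s := by positivity
  have h1 : l1 (A.mulVec (z ⟨0, r.pos⟩)) ≤ M :=
    le_trans (aimd_l1_mulVec hn hβ0 hβ1 hA _) (le_normT hT z _)
  have key : (1/s) * M + (((r:ℕ)):ℝ)/s * M = M := by
    field_simp
    ring
  have : (1/s) * l1 (A.mulVec (z ⟨0, r.pos⟩)) ≤ (1/s) * M := by gcongr
  linarith

lemma DApply_B_contract (hn : 0 < n) (hT : 0 < T) {β : ℝ} (hβ0 : 0 < β) (hβ1 : β < 1)
    {z : Fin T → Fin n → ℝ} (hz : ∀ t, ∑ i, z t i = 0) :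
    normT (DApply (Bmat n β) z) ≤ (1 - (1-β)/(T:ℝ)) * normT z := by
  refine normT_le hT fun r => le_trans (DApply_l1_bound hT _ z r) ?_
  rw [bmat_mulVec (hz _), l1_smul, abs_of_pos hβ0]
  set M := normT z with hMdef
  set s : ℝ := ((r:ℕ):ℝ) + 1 with hsdef
  have hs0 : (0:ℝ) < s := by positivity
  have hM : 0 ≤ M := normT_nonneg hT z
  have hL0 : 0 ≤ l1 (z ⟨0, r.pos⟩) := l1_nonneg _
  have hLM : l1 (z ⟨0, r.pos⟩) ≤ M := le_normT hT z _
  have hT' : (0:ℝ) < (T:ℝ) := by exact_mod_cast hT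
  have hr : s ≤ (T:ℝ) := by
    have := r.isLt
    rw [hsdef]
    exact_mod_cast Nat.succ_le_of_lt this
  have step1 : (1/s) * (β * l1 (z ⟨0, r.pos⟩)) + (((r:ℕ)):ℝ)/s * M
      ≤ (1 - (1-β)/s) * M := by
    have e1 : (1/s) * (β * M) + (((r:ℕ)):ℝ)/s * M = (1 - (1-β)/s) * M := by
      field_simp
      ring
    have e2 : (1/s) * (β * l1 (z ⟨0, r.pos⟩)) ≤ (1/s) * (β * M) := by
      gcongr
    linarith
  have step2 : (1 - (1-β)/s) * M ≤ (1 - (1-β)/(T:ℝ)) * M := by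
    have : (1-β)/(T:ℝ) ≤ (1-β)/s := by
      gcongr
    nlinarith
  linarith

lemma foldl_zsum (hn : 0 < n) {β : ℝ} (L : List (Matrix (Fin n) (Fin n) ℝ))
    (hL : ∀ A ∈ L, IsAIMD n β A) {z : Fin T → Fin n → ℝ} (hz : ∀ t, ∑ i, z t i = 0) :
    ∀ t, ∑ i, (L.foldl (fun v Ag => DApply Ag v) z) t i = 0 := by
  induction L generalizing z with
  | nil => exact hz
  | cons a L ih =>
    simp only [List.foldl_cons]
    exact ih (fun A hA => hL A (List.mem_cons_of_mem a hA))
      (DApply_zsum hn (hL a (List.mem_cons_self)) hz)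

lemma foldl_nonexp (hn : 0 < n) (hT : 0 < T) {β : ℝ} (hβ0 : 0 < β) (hβ1 : β < 1)
    (L : List (Matrix (Fin n) (Fin n) ℝ)) (hL : ∀ A ∈ L, IsAIMD n β A)
    (z : Fin T → Fin n → ℝ) :
    normT (L.foldl (fun v Ag => DApply Ag v) z) ≤ normT z := by
  induction L generalizing z with
  | nil => exact le_refl _
  | cons a L ih =>
    simp only [List.foldl_cons]
    exact le_trans (ih (fun A hA => hL A (List.mem_cons_of_mem a hA)) _)
      (DApply_nonexp hn hT hβ0 hβ1 (hL a (List.mem_cons_self)) z)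

lemma foldl_contract (hn : 0 < n) (hT : 0 < T) {β : ℝ} (hβ0 : 0 < β) (hβ1 : β < 1)
    (L : List (Matrix (Fin n) (Fin n) ℝ)) (hL : ∀ A ∈ L, IsAIMD n β A)
    (hBmem : Bmat n β ∈ L) {z : Fin T → Fin n → ℝ} (hz : ∀ t, ∑ i, z t i = 0) :
    normT (L.foldl (fun v Ag => DApply Ag v) z) ≤ (1 - (1-β)/(T:ℝ)) * normT z := by
  have hT' : (0:ℝ) < (T:ℝ) := by exact_mod_cast hT
  have hc : 0 ≤ 1 - (1-β)/(T:ℝ) := by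
    have hT1 : (1:ℝ) ≤ (T:ℝ) := by exact_mod_cast hT
    have h1 := div_le_self (by linarith : (0:ℝ) ≤ 1-β) hT1
    linarith
  induction L generalizing z with
  | nil => simp at hBmem
  | cons a L ih =>
    simp only [List.foldl_cons]
    by_cases ha : a = Bmat n β
    · calc normT (L.foldl (fun v Ag => DApply Ag v) (DApply a z))
          ≤ normT (DApply a z) :=
            foldl_nonexp hn hT hβ0 hβ1 L (fun A hA => hL A (List.mem_cons_of_mem a hA)) _
        _ ≤ (1 - (1-β)/(T:ℝ)) * normT z := by
            rw [ha]
            exact DApply_B_contract hn hT hβ0 hβ1 hz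
    · have hBmem' : Bmat n β ∈ L := by
        rcases List.mem_cons.mp hBmem with h | h
        · exact absurd h.symm ha
        · exact h
      calc normT (L.foldl (fun v Ag => DApply Ag v) (DApply a z))
          ≤ (1 - (1-β)/(T:ℝ)) * normT (DApply a z) :=
            ih (fun A hA => hL A (List.mem_cons_of_mem a hA)) hBmem'
              (DApply_zsum hn (hL a (List.mem_cons_self)) hz)
        _ ≤ (1 - (1-β)/(T:ℝ)) * normT z :=
            mul_le_mul_of_nonneg_left
              (DApply_nonexp hn hT hβ0 hβ1 (hL a (List.mem_cons_self)) z) hc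

end main

/-- Let `M_g = D(A_g)` for AIMD matrices `A₁, …, A_{k+1}`, at least one of which is the
full back-off matrix `B`. Then `‖M_{k+1} ⋯ M₂ M₁ z‖_T < ‖z‖_T` for every nonzero
`z ∈ W_T`. (The product is applied to `z` by first applying `D(A₁)`, then `D(A₂)`, …) -/
theorem prod_D_aimd_with_backoff_strict_contraction
    (n T : ℕ) (hn : 0 < n) (hT : 0 < T)
    (β : ℝ) (hβ0 : 0 < β) (hβ1 : β < 1)
    (k : ℕ) (A : Fin (k + 1) → Matrix (Fin n) (Fin n) ℝ)
    (hA : ∀ g, IsAIMD n β (A g))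
    (hB : ∃ g, A g = Bmat n β)
    (z : Fin T → Fin n → ℝ)
    (hzW : ∀ t, ∑ i, z t i = 0) (hz0 : z ≠ 0) :
    normT ((List.ofFn A).foldl (fun v Ag => DApply Ag v) z) < normT z := by
  obtain ⟨g, hg⟩ := hB
  have hmem : Bmat n β ∈ List.ofFn A := by
    rw [List.mem_ofFn]
    exact ⟨g, hg⟩
  have hL : ∀ M ∈ List.ofFn A, IsAIMD n β M := by
    intro M hM
    rw [List.mem_ofFn] at hM
    obtain ⟨g', rfl⟩ := hM
    exact hA g'
  have hMz : 0 < normT z := by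
    obtain ⟨t, ht⟩ := Function.ne_iff.mp hz0
    exact lt_of_lt_of_le (l1_pos ht) (le_normT hT z t)
  have hT' : (0:ℝ) < (T:ℝ) := by exact_mod_cast hT
  calc normT ((List.ofFn A).foldl (fun v Ag => DApply Ag v) z)
      ≤ (1 - (1-β)/(T:ℝ)) * normT z := foldl_contract hn hT hβ0 hβ1 _ hL hmem hzW
    _ < 1 * normT z := by
        apply mul_lt_mul_of_pos_right _ hMz
        have : 0 < (1-β)/(T:ℝ) := div_pos (by linarith) hT'
        linarith
    _ = normT z := one_mul _
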